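/- Let λ > 0, c > 0, q ∈ ℕ. For the time-changed OU∧ process of order q+1 defined by Y_t(x) = ∫_{-∞}^{t} ∫_{x-c(t-s)^q}^{x+c(t-s)^q} exp(-λ(t-s)) L(dξ, λ^{q+1} ds), the cumulant generating function equals ∫_0^∞ 2c w^q C{θ e^{-w} ‡ L'} dw and hence does not depend on λ. -/

import Mathlib

open MeasureTheory Real

open Set in
private lemma comp_sub_Iic (t : ℝ) (F : ℝ → ℂ) :
    ∫ s in Iic t, F (t - s) = ∫ u in Ioi (0:ℝ), F u := by
  have h2 := integral_comp_neg_Iic t (fun y => F (t + y))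
  simp only [← sub_eq_add_neg] at h2
  rw [h2]
  have A : MeasurableEmbedding fun y : ℝ => y + t :=
    (Homeomorph.addRight t).isClosedEmbedding.measurableEmbedding
  have := MeasurableEmbedding.setIntegral_map (μ := volume) A F (Ioi 0)
  rw [map_add_right_eq_self (volume : Measure ℝ) t] at this
  have hpre : (fun y : ℝ => y + t) ⁻¹' Ioi 0 = Ioi (-t) := by
    ext y; simp [neg_lt]
  rw [hpre] at this
  simp only [add_comm] at this ⊢
  exact this.symm

/-- For the time-changed OU∧ process of order q+1, the cumulant generating function
equals `∫_0^∞ 2 c w^q C{θ e^{-w} ‡ L'} dw`, and hence does not depend on λ. -/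
theorem TCOUwedge_order_q_cgf_lambda_free
    (lam c x t : ℝ) (hlam : 0 < lam) (hc : 0 < c) (q : ℕ)
    (C : ℝ → ℂ) (θ : ℝ) :
    ∫ s in Set.Iic t, ∫ ξ in Set.Icc (x - c * (t - s) ^ q) (x + c * (t - s) ^ q),
        ((lam : ℂ) ^ (q + 1)) * C (θ * Real.exp (-(lam * (t - s))))
      = ∫ w in Set.Ioi (0:ℝ), (2 * c * w ^ q : ℝ) * C (θ * Real.exp (-w)) := by
  set G : ℝ → ℂ := fun w => (2 * c * w ^ q : ℝ) • C (θ * Real.exp (-w)) with hG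
  set F : ℝ → ℂ := fun u => lam • G (lam * u) with hF
  have step1 : (∫ s in Set.Iic t, ∫ ξ in Set.Icc (x - c * (t - s) ^ q) (x + c * (t - s) ^ q),
        ((lam : ℂ) ^ (q + 1)) * C (θ * Real.exp (-(lam * (t - s)))))
      = ∫ s in Set.Iic t, F (t - s) := by
    refine setIntegral_congr_fun measurableSet_Iic (fun s hs => ?_)
    have hts : (0:ℝ) ≤ t - s := sub_nonneg.mpr hs
    have ha : (0:ℝ) ≤ c * (t - s) ^ q := mul_nonneg hc.le (pow_nonneg hts q)
    rw [setIntegral_const, measureReal_def, Real.volume_Icc]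
    have hlen : x + c * (t - s) ^ q - (x - c * (t - s) ^ q) = 2 * (c * (t - s) ^ q) := by ring
    rw [hlen, ENNReal.toReal_ofReal (by positivity)]
    simp only [hF, hG]
    rw [smul_smul, Complex.real_smul, Complex.real_smul]
    push_cast [mul_pow]
    ring
  rw [step1, comp_sub_Iic t F]
  have step2 : (∫ u in Set.Ioi (0:ℝ), F u) = lam • ∫ u in Set.Ioi (0:ℝ), G (lam * u) := by
    simp only [hF]
    rw [integral_smul]
  rw [step2, integral_comp_mul_left_Ioi G 0 hlam, mul_zero, smul_smul,
    mul_inv_cancel₀ hlam.ne', one_smul]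
  refine setIntegral_congr_fun measurableSet_Ioi (fun w hw => ?_)
  simp [hG, Complex.real_smul]
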